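/- arXiv:1904.01521 — 4 statements merged into one kernel-verified Lean document; each statement's English description precedes it below -/
import Mathlib

section
/- The matrix exponential maps the tangent space onto the manifold: for every real 3×3 symmetric positive definite matrix U with det(U) = 1 there exists a real 3×3 symmetric matrix X with tr(X) = 0 such that exp(X) = U. -/
open Matrix

/-- The matrix exponential maps the tangent space `symsl` onto the manifold `SymSL₊`: every
real 3×3 symmetric positive definite matrix `U` with `det U = 1` is the exponential of some
symmetric traceless matrix `X`. -/
theorem exists_symm_traceless_exp_eq (U : Matrix (Fin 3) (Fin 3) ℝ)
    (hsymm : Uᵀ = U) (hdet : U.det = 1)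
    (hpos : ∀ x : Fin 3 → ℝ, x ≠ 0 → 0 < x ⬝ᵥ U *ᵥ x) :
    ∃ X : Matrix (Fin 3) (Fin 3) ℝ, Xᵀ = X ∧ X.trace = 0 ∧ NormedSpace.exp X = U := by
  have hH : U.IsHermitian := by
    rw [Matrix.IsHermitian, Matrix.conjTranspose_eq_transpose_of_trivial, hsymm]
  have hPD : U.PosDef := Matrix.PosDef.of_dotProduct_mulVec_pos hH (fun x hx => by simpa using hpos x hx)
  set V : Matrix (Fin 3) (Fin 3) ℝ := (hH.eigenvectorUnitary : Matrix (Fin 3) (Fin 3) ℝ) with hV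
  have hVsV : star V * V = 1 := Matrix.mem_unitaryGroup_iff'.mp hH.eigenvectorUnitary.2
  have hVVs : V * star V = 1 := Matrix.mem_unitaryGroup_iff.mp hH.eigenvectorUnitary.2
  have hVinv : V⁻¹ = star V := Matrix.inv_eq_left_inv hVsV
  have hVunit : IsUnit V := Matrix.isUnit_iff_isUnit_det V |>.mpr
    (Matrix.isUnit_det_of_left_inverse hVsV)
  have heig : ∀ i, 0 < hH.eigenvalues i := fun i => hPD.eigenvalues_pos i
  set D : Matrix (Fin 3) (Fin 3) ℝ := diagonal (fun i => Real.log (hH.eigenvalues i)) with hD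
  refine ⟨V * D * star V, ?_, ?_, ?_⟩
  · have : (V * D * star V)ᴴ = V * D * star V := by
      simp only [Matrix.conjTranspose_mul, Matrix.star_eq_conjTranspose,
        Matrix.conjTranspose_conjTranspose]
      rw [Matrix.diagonal_conjTranspose]
      simp [hD, mul_assoc, star_trivial]
    rw [← Matrix.conjTranspose_eq_transpose_of_trivial, this]
  · rw [Matrix.trace_mul_cycle, hVsV, one_mul, hD, Matrix.trace_diagonal]
    rw [← Real.log_prod (fun i _ => ne_of_gt (heig i))]
    have : ∏ i, hH.eigenvalues i = 1 := by
      have := hH.det_eq_prod_eigenvalues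
      simp only [RCLike.ofReal_real_eq_id, id_eq] at this
      rw [hdet] at this
      exact this.symm
    rw [this, Real.log_one]
  · rw [← hVinv, Matrix.exp_conj V D hVunit, hD, Matrix.exp_diagonal]
    have : (NormedSpace.exp fun i => Real.log (hH.eigenvalues i))
        = fun i => hH.eigenvalues i := by
      funext i
      rw [Pi.exp_def, ← Real.exp_eq_exp_ℝ]
      simp only []
      exact Real.exp_log (heig i)
    rw [this, hVinv]
    have hspec := hH.spectral_theorem
    simp only [RCLike.ofReal_real_eq_id, Function.id_comp] at hspec
    exact hspec.symm
end

section
/- (Corollary 1) The matrix exponential, restricted to the tangent space symsl of real 3×3 symmetric traceless matrices, is a bijection onto the manifold SymSL₊ of real 3×3 symmetric positive definite matrices with determinant 1. -/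
open Matrix

/-- `symsl`: the tangent space of real 3×3 symmetric traceless matrices. -/
def symsl : Set (Matrix (Fin 3) (Fin 3) ℝ) :=
  {X | Xᵀ = X ∧ X.trace = 0}

/-- `SymSL₊`: the manifold of real 3×3 symmetric positive definite matrices with
determinant 1. -/
def SymSLpos : Set (Matrix (Fin 3) (Fin 3) ℝ) :=
  {U | Uᵀ = U ∧ U.det = 1 ∧ ∀ x : Fin 3 → ℝ, x ≠ 0 → 0 < x ⬝ᵥ U *ᵥ x}

namespace SymSLAux

open scoped Matrix.Norms.L2Operator MatrixOrder

variable {A : Matrix (Fin 3) (Fin 3) ℝ}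

lemma isSelfAdjoint_iff_transpose : IsSelfAdjoint A ↔ Aᵀ = A := by
  rw [isSelfAdjoint_iff, star_eq_conjTranspose, conjTranspose_eq_transpose_of_trivial]

lemma trace_eq_sum_eigenvalues (hA : A.IsHermitian) :
    A.trace = ∑ i, hA.eigenvalues i := by
  conv_lhs => rw [hA.spectral_theorem]
  rw [Unitary.conjStarAlgAut_apply, Matrix.trace_mul_cycle,
    (Unitary.mem_iff.mp (hA.eigenvectorUnitary).2).1, one_mul,
    trace_diagonal]
  simp

lemma det_cfc (hA : A.IsHermitian) (f : ℝ → ℝ) :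
    (hA.cfc f).det = ∏ i, f (hA.eigenvalues i) := by
  rw [Matrix.IsHermitian.cfc, Unitary.conjStarAlgAut_apply, det_mul_right_comm]
  simp

lemma trace_cfc (hA : A.IsHermitian) (f : ℝ → ℝ) :
    (hA.cfc f).trace = ∑ i, f (hA.eigenvalues i) := by
  rw [Matrix.IsHermitian.cfc, Unitary.conjStarAlgAut_apply, Matrix.trace_mul_cycle,
    (Unitary.mem_iff.mp (hA.eigenvectorUnitary).2).1, one_mul, trace_diagonal]
  simp

lemma exp_eq_cfc (hA : A.IsHermitian) : NormedSpace.exp A = hA.cfc Real.exp := by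
  rw [← hA.cfc_eq, CFC.real_exp_eq_normedSpace_exp hA]

lemma posDef_of_posSemidef_det_ne_zero (h : A.PosSemidef) (hd : A.det ≠ 0) : A.PosDef := by
  refine PosDef.of_dotProduct_mulVec_pos h.1 fun x hx =>
    ((posSemidef_iff_dotProduct_mulVec.mp h).2 x).lt_of_ne' fun h0 => hx ?_
  have hAx : A *ᵥ x = 0 := (h.dotProduct_mulVec_zero_iff x).mp h0
  have hinj : Function.Injective A.mulVec :=
    Matrix.mulVec_injective_iff_isUnit.mpr ((Matrix.isUnit_iff_isUnit_det A).mpr hd.isUnit)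
  exact hinj (by simpa using hAx)

lemma posDef_cfc_of_pos (hA : A.IsHermitian) {f : ℝ → ℝ}
    (hf : ∀ i, 0 < f (hA.eigenvalues i)) : (hA.cfc f).PosDef := by
  refine posDef_of_posSemidef_det_ne_zero ?_ ?_
  · rw [Matrix.IsHermitian.cfc, Unitary.conjStarAlgAut_apply]
    exact (Matrix.PosSemidef.mul_mul_conjTranspose_same
      (posSemidef_diagonal_iff.mpr fun i => by simpa using (hf i).le) _)
  · rw [det_cfc]
    exact (Finset.prod_pos fun i _ => hf i).ne'

lemma posDef_of_mem (hU : A ∈ SymSLpos) : A.PosDef := by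
  obtain ⟨h1, _, h3⟩ := hU
  refine PosDef.of_dotProduct_mulVec_pos (isSelfAdjoint_iff_transpose.mpr h1) fun x hx => ?_
  simpa using h3 x hx

lemma spectrum_pos_of_posDef (hU : A.PosDef) : ∀ x ∈ spectrum ℝ A, 0 < x := by
  intro x hx
  rw [Matrix.IsHermitian.spectrum_real_eq_range_eigenvalues hU.isHermitian] at hx
  obtain ⟨i, rfl⟩ := hx
  exact hU.eigenvalues_pos i

lemma maps_to (X : Matrix (Fin 3) (Fin 3) ℝ) (hX : X ∈ symsl) :
    NormedSpace.exp X ∈ SymSLpos := by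
  obtain ⟨h1, h2⟩ := hX
  have hH : X.IsHermitian := isSelfAdjoint_iff_transpose.mpr h1
  have hexp : NormedSpace.exp X = hH.cfc Real.exp := exp_eq_cfc hH
  have hpd : (NormedSpace.exp X).PosDef := by
    rw [hexp]; exact posDef_cfc_of_pos hH fun i => Real.exp_pos _
  refine ⟨isSelfAdjoint_iff_transpose.mp hpd.isHermitian, ?_, fun x hx => by
    simpa using hpd.dotProduct_mulVec_pos hx⟩
  rw [hexp, det_cfc, ← Real.exp_sum, ← trace_eq_sum_eigenvalues hH, h2, Real.exp_zero]

lemma log_mem (U : Matrix (Fin 3) (Fin 3) ℝ) (hU : U ∈ SymSLpos) :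
    CFC.log U ∈ symsl ∧ NormedSpace.exp (CFC.log U) = U := by
  have hpd : U.PosDef := posDef_of_mem hU
  have hH : U.IsHermitian := hpd.isHermitian
  have hsa : IsSelfAdjoint U := hH
  have hexp : NormedSpace.exp (CFC.log U) = U :=
    CFC.exp_log U ((Matrix.isStrictlyPositive_iff_posDef).mpr hpd)
  have hlog : CFC.log U = hH.cfc Real.log := by
    rw [CFC.log, hH.cfc_eq]
  refine ⟨⟨isSelfAdjoint_iff_transpose.mp IsSelfAdjoint.log, ?_⟩, hexp⟩
  rw [hlog, trace_cfc, ← Real.log_prod fun i _ => (hpd.eigenvalues_pos i).ne']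
  have hdet : ∏ i, hH.eigenvalues i = 1 := by
    have := hH.det_eq_prod_eigenvalues
    rw [hU.2.1] at this
    exact_mod_cast this.symm
  rw [hdet, Real.log_one]

end SymSLAux

/-- (Corollary 1) The matrix exponential, restricted to the tangent space `symsl` of real 3×3
symmetric traceless matrices, is a bijection onto the manifold `SymSL₊` of real 3×3 symmetric
positive definite matrices with determinant 1. -/
theorem exp_bijOn_symsl_SymSLpos :
    Set.BijOn (fun X : Matrix (Fin 3) (Fin 3) ℝ => NormedSpace.exp X) symsl SymSLpos := by
  open scoped Matrix.Norms.L2Operator in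
  refine ⟨SymSLAux.maps_to, fun X hX Y hY h => ?_, fun U hU => ?_⟩
  · have hXsa : IsSelfAdjoint X := SymSLAux.isSelfAdjoint_iff_transpose.mpr hX.1
    have hYsa : IsSelfAdjoint Y := SymSLAux.isSelfAdjoint_iff_transpose.mpr hY.1
    calc X = CFC.log (NormedSpace.exp X) := (CFC.log_exp X hXsa).symm
    _ = CFC.log (NormedSpace.exp Y) := by rw [show NormedSpace.exp X = NormedSpace.exp Y from h]
    _ = Y := CFC.log_exp Y hYsa
  · obtain ⟨hmem, hexp⟩ := SymSLAux.log_mem U hU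
    exact ⟨CFC.log U, hmem, hexp⟩
end

section
/- (Implicit derivative of the reduced coefficients, eq. (A11)) In the discrete reduced-basis setting with W twice differentiable, suppose ξ* : ℝ^{3×3} → ℝᴺ is differentiable on an open set O, satisfies the residual condition Σ_p w_p ⟪P(F^{RB}(p;F̄)), B⁽ⁱ⁾(p)⟫ = 0 for all i and all F̄ ∈ O (where F^{RB}(p;F̄) = F̄ + Σᵢ ξ*ᵢ(F̄) B⁽ⁱ⁾(p)), and that the symmetric matrix D(F̄) with entries D_{ij} = Σ_p w_p D²W(F^{RB}(p;F̄))[B⁽ⁱ⁾(p), B⁽ʲ⁾(p)] is invertible at F̄ ∈ O. Then the derivative of ξ*ⱼ at F̄ in any direction H ∈ ℝ^{3×3} equals Dξ*ⱼ(F̄)[H] = − Σᵢ (D(F̄)⁻¹)_{ij} Σ_p w_p D²W(F^{RB}(p;F̄))[B⁽ⁱ⁾(p), H]. -/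
open Matrix

attribute [local instance] Matrix.frobeniusSeminormedAddCommGroup
  Matrix.frobeniusNormedAddCommGroup Matrix.frobeniusNormedSpace

/-- (Implicit derivative of the reduced coefficients, eq. (A11)) In the discrete reduced-basis
setting with `W` twice differentiable, if the reduced coefficients `ξ*` are differentiable on an
open set `O`, satisfy the residual condition there, and the reduced Jacobian matrix `D(F̄)` is
invertible at `F̄ ∈ O`, then
`Dξ*ⱼ(F̄)[H] = − Σᵢ (D(F̄)⁻¹)ᵢⱼ Σ_p w_p D²W(F^RB(p;F̄))[B i p, H]`. -/
theorem implicit_derivative_of_reduced_coefficients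
    (W : Matrix (Fin 3) (Fin 3) ℝ → ℝ)
    (hW : Differentiable ℝ W) (hW' : Differentiable ℝ (fderiv ℝ W))
    (P : Matrix (Fin 3) (Fin 3) ℝ → Matrix (Fin 3) (Fin 3) ℝ)
    (hP : ∀ F H : Matrix (Fin 3) (Fin 3) ℝ,
      (∑ a, ∑ b, P F a b * H a b) = fderiv ℝ W F H)
    (Nqp N : ℕ) (w : Fin Nqp → ℝ) (hw : ∀ p, 0 < w p)
    (B : Fin N → Fin Nqp → Matrix (Fin 3) (Fin 3) ℝ)
    (O : Set (Matrix (Fin 3) (Fin 3) ℝ)) (hO : IsOpen O)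
    (ξstar : Matrix (Fin 3) (Fin 3) ℝ → Fin N → ℝ)
    (hξdiff : ∀ Fbar ∈ O, DifferentiableAt ℝ ξstar Fbar)
    (FRB : Matrix (Fin 3) (Fin 3) ℝ → Fin Nqp → Matrix (Fin 3) (Fin 3) ℝ)
    (hFRB : ∀ Fbar p, FRB Fbar p = Fbar + ∑ i, ξstar Fbar i • B i p)
    (hres : ∀ Fbar ∈ O, ∀ i : Fin N,
      (∑ p, w p * (∑ a, ∑ b, P (FRB Fbar p) a b * B i p a b)) = 0)
    (D : Matrix (Fin 3) (Fin 3) ℝ → Matrix (Fin N) (Fin N) ℝ)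
    (hD : ∀ Fbar i j,
      D Fbar i j = ∑ p, w p * fderiv ℝ (fderiv ℝ W) (FRB Fbar p) (B i p) (B j p))
    (Fbar : Matrix (Fin 3) (Fin 3) ℝ) (hFbar : Fbar ∈ O) (hDinv : IsUnit (D Fbar)) :
    ∀ (j : Fin N) (H : Matrix (Fin 3) (Fin 3) ℝ),
      fderiv ℝ ξstar Fbar H j =
        -∑ i, (D Fbar)⁻¹ i j *
          (∑ p, w p * fderiv ℝ (fderiv ℝ W) (FRB Fbar p) (B i p) H) := by
  intro j H
  classical
  -- notation
  have hres' : ∀ Fb ∈ O, ∀ i : Fin N,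
      (∑ p, w p * fderiv ℝ W (FRB Fb p) (B i p)) = 0 := by
    intro Fb hFb i
    have h := hres Fb hFb i
    simp_rw [hP] at h
    exact h
  set ξ' := fderiv ℝ ξstar Fbar with hξ'
  have hξdFbar : HasFDerivAt ξstar ξ' Fbar := (hξdiff Fbar hFbar).hasFDerivAt
  have hcomp : ∀ k : Fin N, HasFDerivAt (fun F => ξstar F k)
      ((ContinuousLinearMap.proj (R := ℝ) (φ := fun _ : Fin N => ℝ) k).comp ξ') Fbar :=
    fun k => (ContinuousLinearMap.proj (R := ℝ) (φ := fun _ : Fin N => ℝ) k).hasFDerivAt.comp Fbar hξdFbar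
  set L : Fin Nqp → ((Matrix (Fin 3) (Fin 3) ℝ) →L[ℝ] (Matrix (Fin 3) (Fin 3) ℝ)) := fun p =>
    ContinuousLinearMap.id ℝ (Matrix (Fin 3) (Fin 3) ℝ) +
      ∑ k, (((ContinuousLinearMap.proj (R := ℝ) (φ := fun _ : Fin N => ℝ) k).comp ξ').smulRight (B k p)) with hL
  have hFRBd : ∀ p, HasFDerivAt (fun F => FRB F p) (L p) Fbar := by
    intro p
    have he : (fun F => FRB F p) = fun F => F + ∑ k, ξstar F k • B k p := by
      funext F; exact hFRB F p
    rw [he]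
    exact (hasFDerivAt_id Fbar).add
      (HasFDerivAt.fun_sum fun k _ => (hcomp k).smul_const (B k p))
  set f'' : Fin Nqp → ((Matrix (Fin 3) (Fin 3) ℝ) →L[ℝ] (Matrix (Fin 3) (Fin 3) ℝ) →L[ℝ] ℝ) :=
    fun p => fderiv ℝ (fderiv ℝ W) (FRB Fbar p) with hf''
  have hW'd : ∀ p, HasFDerivAt (fderiv ℝ W) (f'' p) (FRB Fbar p) :=
    fun p => (hW' (FRB Fbar p)).hasFDerivAt
  have hri : ∀ i : Fin N,
      HasFDerivAt (fun F => ∑ p, w p * fderiv ℝ W (FRB F p) (B i p))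
        (∑ p, w p • ((ContinuousLinearMap.apply ℝ ℝ (B i p)).comp
          ((f'' p).comp (L p)))) Fbar := by
    intro i
    apply HasFDerivAt.fun_sum
    intro p _
    letI : NormedAddCommGroup (Matrix (Fin 3) (Fin 3) ℝ →L[ℝ] ℝ) := ContinuousLinearMap.toNormedAddCommGroup
    letI : NormedSpace ℝ (Matrix (Fin 3) (Fin 3) ℝ →L[ℝ] ℝ) := ContinuousLinearMap.toNormedSpace
    have h1 : HasFDerivAt (fun F => fderiv ℝ W (FRB F p)) ((f'' p).comp (L p)) Fbar :=
      (hW'd p).comp Fbar (hFRBd p)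
    have h2 := (ContinuousLinearMap.apply ℝ ℝ (B i p)).hasFDerivAt.comp Fbar h1
    exact h2.const_mul (w p)
  have hzero : ∀ i : Fin N,
      (∑ p, w p • ((ContinuousLinearMap.apply ℝ ℝ (B i p)).comp
        ((f'' p).comp (L p)))) = 0 := by
    intro i
    have hev : (fun F => ∑ p, w p * fderiv ℝ W (FRB F p) (B i p)) =ᶠ[nhds Fbar]
        (fun _ => (0 : ℝ)) := by
      filter_upwards [hO.mem_nhds hFbar] with F hF
      exact hres' F hF i
    have h0 : HasFDerivAt (fun _ : Matrix (Fin 3) (Fin 3) ℝ => (0 : ℝ))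
        (0 : Matrix (Fin 3) (Fin 3) ℝ →L[ℝ] ℝ) Fbar := hasFDerivAt_const 0 Fbar
    have h0' : HasFDerivAt (fun F => ∑ p, w p * fderiv ℝ W (FRB F p) (B i p)) 0 Fbar :=
      h0.congr_of_eventuallyEq hev
    exact (hri i).unique h0'
  have hsym : ∀ p (v v' : (Matrix (Fin 3) (Fin 3) ℝ)), f'' p v v' = f'' p v' v :=
    fun p => second_derivative_symmetric (fun y => (hW y).hasFDerivAt) (hW'd p)
  -- evaluate the zero derivative at H
  set a : Fin N → ℝ := fun i => ∑ p, w p * f'' p (B i p) H with ha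
  set c : Fin N → ℝ := fun k => ξ' H k with hc
  have key : ∀ i : Fin N, a i + ∑ k, D Fbar k i * c k = 0 := by
    intro i
    have h' : (∑ p, w p * f'' p (L p H) (B i p)) = 0 := by
      have := hzero i
      have happ := congrArg (fun T : (Matrix (Fin 3) (Fin 3) ℝ) →L[ℝ] ℝ => T H) this
      simp [ContinuousLinearMap.sum_apply, ContinuousLinearMap.smul_apply,
        ContinuousLinearMap.comp_apply, ContinuousLinearMap.apply_apply,
        smul_eq_mul] at happ
      exact happ
    have hLH : ∀ p, L p H = H + ∑ k, c k • B k p := by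
      intro p
      simp [hL, hc, ContinuousLinearMap.sum_apply]
    have hexp : ∀ p, w p * f'' p (L p H) (B i p)
        = w p * f'' p (B i p) H + ∑ k, (w p * f'' p (B k p) (B i p)) * c k := by
      intro p
      rw [hLH p]
      simp only [map_add, map_sum, _root_.map_smul, ContinuousLinearMap.add_apply,
        ContinuousLinearMap.sum_apply, ContinuousLinearMap.smul_apply, smul_eq_mul]
      rw [hsym p H (B i p), mul_add, Finset.mul_sum]
      congr 1
      exact Finset.sum_congr rfl fun k _ => by ring
    calc a i + ∑ k, D Fbar k i * c k
        = ∑ p, w p * f'' p (L p H) (B i p) := by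
          simp only [hexp, Finset.sum_add_distrib, ha, hD]
          congr 1
          rw [Finset.sum_comm]
          exact Finset.sum_congr rfl fun k _ => by rw [Finset.sum_mul]
      _ = 0 := h'
  -- linear algebra: solve for c
  have hdet : IsUnit (D Fbar).det := (Matrix.isUnit_iff_isUnit_det _).mp hDinv
  have hdetT : IsUnit ((D Fbar)ᵀ).det := by simpa [Matrix.det_transpose] using hdet
  have hmv : (D Fbar)ᵀ *ᵥ c = -a := by
    funext i
    have := key i
    simp only [Matrix.mulVec, dotProduct, Matrix.transpose_apply, Pi.neg_apply]
    linarith [key i]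
  have hcsol : c = ((D Fbar)ᵀ)⁻¹ *ᵥ (-a) := by
    rw [← hmv, Matrix.mulVec_mulVec, Matrix.nonsing_inv_mul _ hdetT, Matrix.one_mulVec]
  have hcj : c j = -∑ i, (D Fbar)⁻¹ i j * a i := by
    rw [hcsol]
    simp only [Matrix.mulVec, dotProduct, ← Matrix.transpose_nonsing_inv,
      Matrix.transpose_apply, Pi.neg_apply, mul_neg, ← Finset.sum_neg_distrib]
  -- conclude
  have hgoal : fderiv ℝ ξstar Fbar H j = c j := rfl
  rw [hgoal, hcj]
end

section
/- (Effective stiffness of the reduced-basis model, Appendix B.2) In the discrete reduced-basis setting with W twice differentiable, suppose ξ* : ℝ^{3×3} → ℝᴺ is twice differentiable on an open set O, satisfies the residual condition Σ_p w_p ⟪P(F^{RB}(p;F̄)), B⁽ⁱ⁾(p)⟫ = 0 for all i and all F̄ ∈ O (where F^{RB}(p;F̄) = F̄ + Σᵢ ξ*ᵢ(F̄) B⁽ⁱ⁾(p)), and that the matrix D(F̄) with entries D_{ij} = Σ_p w_p D²W(F^{RB}(p;F̄))[B⁽ⁱ⁾(p), B⁽ʲ⁾(p)] is invertible on O. Then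 the second derivative of the effective energy W̄^{RB}(F̄) = Σ_p w_p W(F^{RB}(p;F̄)) satisfies, for all directions H, K ∈ ℝ^{3×3}: D²W̄^{RB}(F̄)[K,H] = Σ_p w_p D²W(F^{RB}(p;F̄))[K,H] − Σ_{i,j} (D(F̄)⁻¹)_{ij} (Σ_p w_p D²W(F^{RB}(p;F̄))[K, B⁽ⁱ⁾(p)]) · (Σ_q w_q D²W(F^{RB}(q;F̄))[B⁽ʲ⁾(q), H]). -/
open Matrix Topology Filter

attribute [local instance] Matrix.frobeniusSeminormedAddCommGroup
  Matrix.frobeniusNormedAddCommGroup Matrix.frobeniusNormedSpace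

noncomputable def rbDg {N : ℕ}
    (ξ' : Matrix (Fin 3) (Fin 3) ℝ →L[ℝ] (Fin N → ℝ))
    (Bp : Fin N → Matrix (Fin 3) (Fin 3) ℝ) :
    Matrix (Fin 3) (Fin 3) ℝ →L[ℝ] Matrix (Fin 3) (Fin 3) ℝ :=
  ContinuousLinearMap.id ℝ _ +
    ∑ i, ((ContinuousLinearMap.proj i).comp ξ').smulRight (Bp i)

lemma rbDg_apply {N : ℕ}
    (ξ' : Matrix (Fin 3) (Fin 3) ℝ →L[ℝ] (Fin N → ℝ))
    (Bp : Fin N → Matrix (Fin 3) (Fin 3) ℝ) (K : Matrix (Fin 3) (Fin 3) ℝ) :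
    rbDg ξ' Bp K = K + ∑ i, ξ' K i • Bp i := by
  simp [rbDg, ContinuousLinearMap.sum_apply]

lemma hasFDerivAt_rb {N : ℕ}
    (ξstar : Matrix (Fin 3) (Fin 3) ℝ → Fin N → ℝ)
    (Bp : Fin N → Matrix (Fin 3) (Fin 3) ℝ)
    (x : Matrix (Fin 3) (Fin 3) ℝ)
    (hξ : DifferentiableAt ℝ ξstar x) :
    HasFDerivAt (fun F => F + ∑ i, ξstar F i • Bp i)
      (rbDg (fderiv ℝ ξstar x) Bp) x := by
  refine (hasFDerivAt_id x).add (HasFDerivAt.fun_sum fun i _ => ?_)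
  have h1 : HasFDerivAt (fun F => ξstar F i)
      ((ContinuousLinearMap.proj i).comp (fderiv ℝ ξstar x)) x := by
    exact HasFDerivAt.comp x
      ((ContinuousLinearMap.proj (R := ℝ) (φ := fun _ : Fin N => ℝ) i).hasFDerivAt) hξ.hasFDerivAt
  exact h1.smul_const (Bp i)

/-- (Effective stiffness of the reduced-basis model, Appendix B.2) In the discrete
reduced-basis setting with `W` twice differentiable, if `ξ*` is twice differentiable on an open
set `O`, satisfies the residual condition there, and the reduced Jacobian `D` is invertible on
`O`, then the second derivative of the effective energy `W̄^RB` satisfies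
`D²W̄^RB(F̄)[K,H] = Σ_p w_p D²W[K,H] − Σ_{i,j} (D⁻¹)ᵢⱼ (Σ_p w_p D²W[K, Bⁱ]) (Σ_q w_q D²W[Bʲ, H])`. -/
theorem effective_stiffness_of_RB
    (W : Matrix (Fin 3) (Fin 3) ℝ → ℝ)
    (hW : Differentiable ℝ W) (hW' : Differentiable ℝ (fderiv ℝ W))
    (P : Matrix (Fin 3) (Fin 3) ℝ → Matrix (Fin 3) (Fin 3) ℝ)
    (hP : ∀ F H : Matrix (Fin 3) (Fin 3) ℝ,
      (∑ a, ∑ b, P F a b * H a b) = fderiv ℝ W F H)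
    (Nqp N : ℕ) (w : Fin Nqp → ℝ) (hw : ∀ p, 0 < w p)
    (B : Fin N → Fin Nqp → Matrix (Fin 3) (Fin 3) ℝ)
    (O : Set (Matrix (Fin 3) (Fin 3) ℝ)) (hO : IsOpen O)
    (ξstar : Matrix (Fin 3) (Fin 3) ℝ → Fin N → ℝ)
    (hξdiff : ∀ Fbar ∈ O, DifferentiableAt ℝ ξstar Fbar)
    (hξdiff2 : ∀ Fbar ∈ O, DifferentiableAt ℝ (fderiv ℝ ξstar) Fbar)
    (FRB : Matrix (Fin 3) (Fin 3) ℝ → Fin Nqp → Matrix (Fin 3) (Fin 3) ℝ)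
    (hFRB : ∀ Fbar p, FRB Fbar p = Fbar + ∑ i, ξstar Fbar i • B i p)
    (hres : ∀ Fbar ∈ O, ∀ i : Fin N,
      (∑ p, w p * (∑ a, ∑ b, P (FRB Fbar p) a b * B i p a b)) = 0)
    (D : Matrix (Fin 3) (Fin 3) ℝ → Matrix (Fin N) (Fin N) ℝ)
    (hD : ∀ Fbar i j,
      D Fbar i j = ∑ p, w p * fderiv ℝ (fderiv ℝ W) (FRB Fbar p) (B i p) (B j p))
    (hDinv : ∀ Fbar ∈ O, IsUnit (D Fbar))
    (WbarRB : Matrix (Fin 3) (Fin 3) ℝ → ℝ)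
    (hWbarRB : ∀ Fbar, WbarRB Fbar = ∑ p, w p * W (FRB Fbar p)) :
    ∀ Fbar ∈ O, ∀ H K : Matrix (Fin 3) (Fin 3) ℝ,
      fderiv ℝ (fderiv ℝ WbarRB) Fbar K H =
        (∑ p, w p * fderiv ℝ (fderiv ℝ W) (FRB Fbar p) K H) -
        ∑ i, ∑ j, (D Fbar)⁻¹ i j *
          ((∑ p, w p * fderiv ℝ (fderiv ℝ W) (FRB Fbar p) K (B i p)) *
           (∑ q, w q * fderiv ℝ (fderiv ℝ W) (FRB Fbar q) (B j q) H)) := by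
  intro Fbar hFbar H K
  classical
  -- derivative of F ↦ FRB F p
  have hgd : ∀ x ∈ O, ∀ p, HasFDerivAt (fun F => FRB F p)
      (rbDg (fderiv ℝ ξstar x) (fun k => B k p)) x := by
    intro x hx p
    have he : (fun F => FRB F p) = fun F => F + ∑ i, ξstar F i • B i p := by
      funext F; exact hFRB F p
    rw [he]
    exact hasFDerivAt_rb ξstar (fun k => B k p) x (hξdiff x hx)
  -- derivative of F ↦ fderiv W (FRB F p)
  have hPW : ∀ x ∈ O, ∀ p, HasFDerivAt (fun F => fderiv ℝ W (FRB F p))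
      ((fderiv ℝ (fderiv ℝ W) (FRB x p)).comp (rbDg (fderiv ℝ ξstar x) (fun k => B k p))) x := by
    intro x hx p
    letI : NormedAddCommGroup (Matrix (Fin 3) (Fin 3) ℝ →L[ℝ] ℝ) := ContinuousLinearMap.toNormedAddCommGroup
    letI : NormedSpace ℝ (Matrix (Fin 3) (Fin 3) ℝ →L[ℝ] ℝ) := ContinuousLinearMap.toNormedSpace
    have h := HasFDerivAt.comp (g := fderiv ℝ W) x (hW' (FRB x p)).hasFDerivAt (hgd x hx p)
    exact h
  -- residual in fderiv form
  have hres' : ∀ x ∈ O, ∀ i, (∑ p, w p * fderiv ℝ W (FRB x p) (B i p)) = 0 := by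
    intro x hx i
    have h := hres x hx i
    simp only [hP] at h
    exact h
  set v : Fin N → ℝ := fun j => fderiv ℝ ξstar Fbar K j with hv
  have hvdef : ∀ j, (fderiv ℝ ξstar Fbar) K j = v j := fun _ => rfl
  -- derivative of residual is zero
  have hRzero : ∀ i : Fin N,
      (∑ p, w p • ((ContinuousLinearMap.apply ℝ ℝ (B i p)).comp
        ((fderiv ℝ (fderiv ℝ W) (FRB Fbar p)).comp
          (rbDg (fderiv ℝ ξstar Fbar) (fun k => B k p)))))
        = (0 : Matrix (Fin 3) (Fin 3) ℝ →L[ℝ] ℝ) := by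
    intro i
    have hRd : HasFDerivAt (fun F => ∑ p, w p * fderiv ℝ W (FRB F p) (B i p))
        (∑ p, w p • ((ContinuousLinearMap.apply ℝ ℝ (B i p)).comp
          ((fderiv ℝ (fderiv ℝ W) (FRB Fbar p)).comp
            (rbDg (fderiv ℝ ξstar Fbar) (fun k => B k p))))) Fbar := by
      refine HasFDerivAt.fun_sum fun p _ => ?_
      exact (HasFDerivAt.comp Fbar
        (ContinuousLinearMap.apply ℝ ℝ (B i p)).hasFDerivAt (hPW Fbar hFbar p)).const_mul (w p)
    have h0 : HasFDerivAt (fun F => ∑ p, w p * fderiv ℝ W (FRB F p) (B i p))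
        (0 : Matrix (Fin 3) (Fin 3) ℝ →L[ℝ] ℝ) Fbar := by
      have heq : (fun F => ∑ p, w p * fderiv ℝ W (FRB F p) (B i p)) =ᶠ[𝓝 Fbar]
          fun _ => (0:ℝ) := by
        filter_upwards [hO.mem_nhds hFbar] with x hx using hres' x hx i
      exact (Filter.EventuallyEq.hasFDerivAt_iff heq).2 (hasFDerivAt_const 0 Fbar)
    exact hRd.unique h0
  -- key linear relation
  have hkey : ∀ i, (∑ p, w p * fderiv ℝ (fderiv ℝ W) (FRB Fbar p) K (B i p))
      + ∑ j, v j * D Fbar j i = 0 := by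
    intro i
    have h1 := congrArg (fun L : Matrix (Fin 3) (Fin 3) ℝ →L[ℝ] ℝ => L K) (hRzero i)
    simp only [ContinuousLinearMap.sum_apply, ContinuousLinearMap.smul_apply,
      ContinuousLinearMap.comp_apply, ContinuousLinearMap.apply_apply,
      ContinuousLinearMap.zero_apply, smul_eq_mul, rbDg_apply, map_add, map_sum, _root_.map_smul, ContinuousLinearMap.smul_apply,
      ContinuousLinearMap.add_apply] at h1
    replace h1 : ∑ p, w p * fderiv ℝ (fderiv ℝ W) (FRB Fbar p)
        (rbDg (fderiv ℝ ξstar Fbar) (fun k => B k p) K) (B i p) = 0 := h1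
    simp only [rbDg_apply, map_add, map_sum, _root_.map_smul, ContinuousLinearMap.add_apply,
      ContinuousLinearMap.sum_apply, ContinuousLinearMap.smul_apply, smul_eq_mul] at h1
    simp only [hvdef] at h1
    rw [← h1]
    simp only [ContinuousLinearMap.sum_apply, ContinuousLinearMap.smul_apply,
      smul_eq_mul, mul_add, Finset.sum_add_distrib]
    congr 1
    simp only [hD, Finset.mul_sum]
    rw [Finset.sum_comm]
    refine Finset.sum_congr rfl fun p _ => Finset.sum_congr rfl fun j _ => by ring
  -- first derivative of WbarRB on O
  have hWbar' : WbarRB = fun F => ∑ p, w p * W (FRB F p) := funext hWbarRB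
  have hfdWbar : ∀ x ∈ O, fderiv ℝ WbarRB x = ∑ p, w p • fderiv ℝ W (FRB x p) := by
    intro x hx
    have hd : HasFDerivAt WbarRB
        (∑ p, w p • ((fderiv ℝ W (FRB x p)).comp
          (rbDg (fderiv ℝ ξstar x) (fun k => B k p)))) x := by
      rw [hWbar']
      exact HasFDerivAt.fun_sum fun p _ =>
        ((HasFDerivAt.comp x (hW (FRB x p)).hasFDerivAt (hgd x hx p)).const_mul (w p))
    rw [hd.fderiv]
    ext K'
    simp only [ContinuousLinearMap.sum_apply, ContinuousLinearMap.smul_apply,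
      ContinuousLinearMap.comp_apply, smul_eq_mul, rbDg_apply, map_add, map_sum, _root_.map_smul, ContinuousLinearMap.smul_apply,
      mul_add, Finset.sum_add_distrib]
    rw [add_eq_left]
    simp only [Finset.mul_sum]
    rw [Finset.sum_comm]
    refine Finset.sum_eq_zero fun j _ => ?_
    have h0 := hres' x hx j
    calc ∑ p, w p * (fderiv ℝ ξstar x K' j * fderiv ℝ W (FRB x p) (B j p))
        = fderiv ℝ ξstar x K' j * ∑ p, w p * fderiv ℝ W (FRB x p) (B j p) := by
          rw [Finset.mul_sum]; exact Finset.sum_congr rfl fun p _ => by ring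
      _ = 0 := by rw [h0, mul_zero]
  -- second derivative
  have hEq : fderiv ℝ (fderiv ℝ WbarRB) Fbar
      = fderiv ℝ (fun x => ∑ p, w p • fderiv ℝ W (FRB x p)) Fbar := by
    apply Filter.EventuallyEq.fderiv_eq
    filter_upwards [hO.mem_nhds hFbar] with x hx using hfdWbar x hx
  have hLd : HasFDerivAt (fun x => ∑ p, w p • fderiv ℝ W (FRB x p))
      (∑ p, w p • ((fderiv ℝ (fderiv ℝ W) (FRB Fbar p)).comp
        (rbDg (fderiv ℝ ξstar Fbar) (fun k => B k p)))) Fbar := by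
    letI : NormedAddCommGroup (Matrix (Fin 3) (Fin 3) ℝ →L[ℝ] ℝ) := ContinuousLinearMap.toNormedAddCommGroup
    letI : NormedSpace ℝ (Matrix (Fin 3) (Fin 3) ℝ →L[ℝ] ℝ) := ContinuousLinearMap.toNormedSpace
    have h0 : ∀ p, HasFDerivAt (fun F => w p • fderiv ℝ W (FRB F p))
        (w p • (fderiv ℝ (fderiv ℝ W) (FRB Fbar p)).comp (rbDg (fderiv ℝ ξstar Fbar) (fun k => B k p))) Fbar := by
      intro p
      have h := HasFDerivAt.comp Fbar
        (w p • ContinuousLinearMap.id ℝ (Matrix (Fin 3) (Fin 3) ℝ →L[ℝ] ℝ)).hasFDerivAt (hPW Fbar hFbar p)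
      have e : (w p • ContinuousLinearMap.id ℝ (Matrix (Fin 3) (Fin 3) ℝ →L[ℝ] ℝ)).comp
          ((fderiv ℝ (fderiv ℝ W) (FRB Fbar p)).comp (rbDg (fderiv ℝ ξstar Fbar) (fun k => B k p)))
          = w p • (fderiv ℝ (fderiv ℝ W) (FRB Fbar p)).comp (rbDg (fderiv ℝ ξstar Fbar) (fun k => B k p)) := by
        ext; simp
      exact h.congr_fderiv e
    exact HasFDerivAt.fun_sum fun p _ => h0 p
  rw [hEq, hLd.fderiv]
  -- evaluate
  simp only [ContinuousLinearMap.sum_apply, ContinuousLinearMap.smul_apply,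
    ContinuousLinearMap.comp_apply, smul_eq_mul, rbDg_apply, map_add, map_sum, _root_.map_smul, ContinuousLinearMap.smul_apply,
    ContinuousLinearMap.add_apply, mul_add, Finset.sum_add_distrib]
  simp only [hvdef]
  -- goal: Σp wp ApKH + Σp wp * Σj vj ApBʲH = Σp wp ApKH − Σij (D⁻¹)ij ri Sj
  -- linear algebra
  have hM := hDinv Fbar hFbar
  have hdet : IsUnit (D Fbar).det := (Matrix.isUnit_iff_isUnit_det _).1 hM
  set r : Fin N → ℝ :=
    fun i => ∑ p, w p * fderiv ℝ (fderiv ℝ W) (FRB Fbar p) K (B i p) with hr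
  have hvec : Matrix.vecMul v (D Fbar) = -r := by
    funext i
    have := hkey i
    simp only [Matrix.vecMul, dotProduct, Pi.neg_apply]
    linarith [hkey i]
  have hvj : ∀ j, v j = -∑ i, r i * (D Fbar)⁻¹ i j := by
    have hv2 : v = Matrix.vecMul (-r) (D Fbar)⁻¹ := by
      rw [← hvec, Matrix.vecMul_vecMul, Matrix.mul_nonsing_inv _ hdet, Matrix.vecMul_one]
    intro j
    rw [hv2]
    simp [Matrix.vecMul, dotProduct, Finset.sum_neg_distrib, neg_mul]
  -- conclude
  rw [sub_eq_add_neg]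
  congr 1
  -- Σp wp * Σj vj * ApBʲH = -Σij ...
  have : ∀ p, w p * ∑ j, v j * fderiv ℝ (fderiv ℝ W) (FRB Fbar p) (B j p) H
      = ∑ j, v j * (w p * fderiv ℝ (fderiv ℝ W) (FRB Fbar p) (B j p) H) := by
    intro p; rw [Finset.mul_sum]; exact Finset.sum_congr rfl fun j _ => by ring
  simp only [this]
  rw [Finset.sum_comm]
  have hSj : ∀ j, ∑ p, v j * (w p * fderiv ℝ (fderiv ℝ W) (FRB Fbar p) (B j p) H)
      = v j * ∑ q, w q * fderiv ℝ (fderiv ℝ W) (FRB Fbar q) (B j q) H := by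
    intro j; rw [Finset.mul_sum]
  simp only [hSj, hvj, hr]
  simp only [← Finset.mul_sum]
  have step : ∀ j : Fin N,
      (-∑ i, (∑ p, w p * fderiv ℝ (fderiv ℝ W) (FRB Fbar p) K (B i p)) * (D Fbar)⁻¹ i j) *
        (∑ q, w q * fderiv ℝ (fderiv ℝ W) (FRB Fbar q) (B j q) H)
      = ∑ i, -((D Fbar)⁻¹ i j *
          ((∑ p, w p * fderiv ℝ (fderiv ℝ W) (FRB Fbar p) K (B i p)) *
           (∑ q, w q * fderiv ℝ (fderiv ℝ W) (FRB Fbar q) (B j q) H))) := by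
    intro j
    rw [neg_mul, Finset.sum_mul, ← Finset.sum_neg_distrib]
    exact Finset.sum_congr rfl fun i _ => by ring
  simp only [step]
  rw [Finset.sum_comm]
  simp [Finset.sum_neg_distrib]
end
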